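/- (Mordukhovich's criterion at infinity, Lipschitz form.) Let F : ℝ^n ⇉ ℝ^m be a set-valued mapping with closed graph and ȳ ∈ J(F). Then D*F(∞, ȳ)(0) = {0} if and only if there exist constants R > 0, ℓ > 0 and a neighborhood V of ȳ in ℝ^m such that the distance function d_F is Lipschitz continuous with modulus ℓ on some neighborhood of each point of gph F ∩ ((ℝ^n \ 𝔹_R) × V). -/

import Mathlib

open Filter Topology Set Metric Pointwise
open scoped RealInnerProductSpace ENNReal

noncomputable section

variable {E F G : Type*}
  [NormedAddCommGroup E] [InnerProductSpace ℝ E]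
  [NormedAddCommGroup F] [InnerProductSpace ℝ F]
  [NormedAddCommGroup G] [InnerProductSpace ℝ G]

/-- The regular (Fréchet) normal cone to a subset of a product of inner product
spaces, at a point `p` (empty if `p ∉ Ω`). -/
def frechetNormalCone2 (Ω : Set (E × F)) (p : E × F) : Set (E × F) :=
  {ξ | p ∈ Ω ∧ ∀ ε > (0:ℝ), ∀ᶠ q in nhdsWithin p Ω,
      ⟪ξ.1, q.1 - p.1⟫ + ⟪ξ.2, q.2 - p.2⟫ ≤ ε * ‖q - p‖}

/-- The limiting (Mordukhovich) normal cone. -/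
def limitingNormalCone2 (Ω : Set (E × F)) (p : E × F) : Set (E × F) :=
  {ξ | ∃ pk : ℕ → E × F, ∃ ξk : ℕ → E × F,
    (∀ k, pk k ∈ Ω) ∧ Tendsto pk atTop (𝓝 p) ∧
    (∀ k, ξk k ∈ frechetNormalCone2 Ω (pk k)) ∧ Tendsto ξk atTop (𝓝 ξ)}

/-- The normal cone to `Ω ⊆ E × F` at `(∞, ȳ)`. -/
def normalConeAtInfty (Ω : Set (E × F)) (ybar : F) : Set (E × F) :=
  {ξ | ∃ pk : ℕ → E × F, ∃ ξk : ℕ → E × F,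
    (∀ k, pk k ∈ Ω) ∧ Tendsto (fun k => ‖(pk k).1‖) atTop atTop ∧
    Tendsto (fun k => (pk k).2) atTop (𝓝 ybar) ∧
    (∀ k, ξk k ∈ frechetNormalCone2 Ω (pk k)) ∧ Tendsto ξk atTop (𝓝 ξ)}

/-- `Ω ⊆ E × F` is locally closed at `(∞, ȳ)`. -/
def LocallyClosedAtInfty (Ω : Set (E × F)) (ybar : F) : Prop :=
  ∃ R > (0:ℝ), ∃ V ∈ 𝓝 ybar, IsClosed V ∧
    IsClosed (Ω ∩ {p : E × F | R ≤ ‖p.1‖ ∧ p.2 ∈ V})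

/-- Graph of a set-valued mapping. -/
def svGraph (S : E → Set F) : Set (E × F) := {p | p.2 ∈ S p.1}

/-- Jelonek set of a set-valued mapping. -/
def jelonek (S : E → Set F) : Set F :=
  {y | ∃ xk : ℕ → E, ∃ yk : ℕ → F,
    Tendsto (fun k => ‖xk k‖) atTop atTop ∧ (∀ k, yk k ∈ S (xk k)) ∧
    Tendsto yk atTop (𝓝 y)}

/-- Coderivative of a set-valued mapping at a point of its graph. -/
def coderiv (S : E → Set F) (x : E) (y : F) (v : F) : Set E :=
  {u | (u, -v) ∈ limitingNormalCone2 (svGraph S) (x, y)}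

/-- Coderivative of a set-valued mapping at `(∞, ȳ)`. -/
def coderivAtInfty (S : E → Set F) (ybar : F) (v : F) : Set E :=
  {u | (u, -v) ∈ normalConeAtInfty (svGraph S) ybar}

/-- Regular normal cone, one-space version. -/
def frechetNormalCone1 (Ω : Set E) (x : E) : Set E :=
  {ξ | x ∈ Ω ∧ ∀ ε > (0:ℝ), ∀ᶠ x' in nhdsWithin x Ω, ⟪ξ, x' - x⟫ ≤ ε * ‖x' - x‖}

/-- Normal cone at infinity to an unbounded subset of `E`. -/
def normalConeAtInfty1 (Ω : Set E) : Set E :=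
  {ξ | ∃ xk : ℕ → E, ∃ ξk : ℕ → E, (∀ k, xk k ∈ Ω) ∧
    Tendsto (fun k => ‖xk k‖) atTop atTop ∧
    (∀ k, ξk k ∈ frechetNormalCone1 Ω (xk k)) ∧ Tendsto ξk atTop (𝓝 ξ)}

/-- Epigraph of an extended-real-valued function. -/
def epiSet (f : E → EReal) : Set (E × ℝ) := {p | f p.1 ≤ (p.2 : EReal)}

/-- Graph of an extended-real-valued function, as a subset of `E × ℝ`. -/
def gphFun (f : E → EReal) : Set (E × ℝ) := {p | f p.1 = (p.2 : EReal)}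

/-- Jelonek set of a function. -/
def jelonekFun (f : E → EReal) : Set ℝ :=
  {y | ∃ xk : ℕ → E, Tendsto (fun k => ‖xk k‖) atTop atTop ∧
    Tendsto (fun k => f (xk k)) atTop (𝓝 (y : EReal))}

/-- Limiting subdifferential of `f` at `x` (empty outside `dom f`). -/
def limSubdiff (f : E → EReal) (x : E) : Set E :=
  {u | ∃ r : ℝ, f x = (r : EReal) ∧
    (u, (-1 : ℝ)) ∈ limitingNormalCone2 (epiSet f) (x, r)}

/-- Limiting subdifferential of `f` at `(∞, ȳ)`. -/
def limSubdiffAtInfty (f : E → EReal) (ybar : ℝ) : Set E :=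
  {u | (u, (-1 : ℝ)) ∈ normalConeAtInfty (epiSet f) ybar}

/-- Singular subdifferential of `f` at `(∞, ȳ)`. -/
def singSubdiffAtInfty (f : E → EReal) (ybar : ℝ) : Set E :=
  {u | (u, (0 : ℝ)) ∈ normalConeAtInfty (epiSet f) ybar}

/-- Inverse of a set-valued mapping. -/
def svInv (S : E → Set F) (y : F) : Set E := {x | y ∈ S x}

/-- Preimage `F⁻¹(V) = {x : F(x) ∩ V ≠ ∅}`. -/
def svPreimage (S : E → Set F) (V : Set F) : Set E := {x | (S x ∩ V).Nonempty}

/-- Distance function of a set-valued mapping, with value `+∞` on empty values. -/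
def dSV (S : E → Set F) (p : E × F) : EReal :=
  ((EMetric.infEdist p.2 (S p.1) : ℝ≥0∞) : EReal)

/-- Regular normal cone on `(E × F) × ℝ`. -/
def frechetNormalCone3 (Ω : Set ((E × F) × ℝ)) (p : (E × F) × ℝ) : Set ((E × F) × ℝ) :=
  {ξ | p ∈ Ω ∧ ∀ ε > (0:ℝ), ∀ᶠ q in nhdsWithin p Ω,
      ⟪ξ.1.1, q.1.1 - p.1.1⟫ + ⟪ξ.1.2, q.1.2 - p.1.2⟫ + ξ.2 * (q.2 - p.2)
        ≤ ε * ‖q - p‖}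

/-- Limiting normal cone on `(E × F) × ℝ`. -/
def limitingNormalCone3 (Ω : Set ((E × F) × ℝ)) (p : (E × F) × ℝ) : Set ((E × F) × ℝ) :=
  {ξ | ∃ pk ξk : ℕ → (E × F) × ℝ, (∀ k, pk k ∈ Ω) ∧ Tendsto pk atTop (𝓝 p) ∧
    (∀ k, ξk k ∈ frechetNormalCone3 Ω (pk k)) ∧ Tendsto ξk atTop (𝓝 ξ)}

/-- Limiting subdifferential of the distance function `d_F`. -/
def limSubdiffD (S : E → Set F) (p : E × F) : Set (E × F) :=
  {w | ∃ r : ℝ, dSV S p = (r : EReal) ∧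
    (w, (-1 : ℝ)) ∈ limitingNormalCone3 {q : (E × F) × ℝ | dSV S q.1 ≤ (q.2 : EReal)} (p, r)}

/-- The set `J⁺(F₁ + F₂, y)`. -/
def jplus (S₁ S₂ : E → Set F) (y : F) : Set (F × F) :=
  {q | ∃ xk : ℕ → E, ∃ y1k y2k : ℕ → F,
    Tendsto (fun k => ‖xk k‖) atTop atTop ∧
    (∀ k, y1k k ∈ S₁ (xk k)) ∧ (∀ k, y2k k ∈ S₂ (xk k)) ∧
    Tendsto y1k atTop (𝓝 q.1) ∧ Tendsto y2k atTop (𝓝 q.2) ∧ q.1 + q.2 = y}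

/-- The set `J°(F₂ ∘ F₁, y)`. -/
def jcirc (S₁ : E → Set G) (S₂ : G → Set F) (y : F) : Set G :=
  {z | ∃ xk : ℕ → E, ∃ zk : ℕ → G, ∃ yk : ℕ → F,
    Tendsto (fun k => ‖xk k‖) atTop atTop ∧ (∀ k, zk k ∈ S₁ (xk k)) ∧
    (∀ k, yk k ∈ S₂ (zk k)) ∧ Tendsto zk atTop (𝓝 z) ∧ Tendsto yk atTop (𝓝 y)}

/-- Composition `F₂ ∘ F₁` of set-valued mappings. -/
def svComp (S₂ : G → Set F) (S₁ : E → Set G) (x : E) : Set F :=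
  {y | ∃ z ∈ S₁ x, y ∈ S₂ z}

abbrev Eucl (n : ℕ) := EuclideanSpace ℝ (Fin n)

lemma ennreal_le_ofReal_of_ereal {e : ℝ≥0∞} {r : ℝ} (hr : 0 ≤ r)
    (h : ((e : EReal)) ≤ ((r : ℝ) : EReal)) : e ≤ ENNReal.ofReal r := by
  have h2 : ((ENNReal.ofReal r : ℝ≥0∞) : EReal) = ((r : ℝ) : EReal) := by
    rw [EReal.coe_ennreal_ofReal, max_eq_left hr]
  exact EReal.coe_ennreal_le_coe_ennreal_iff.mp (h2 ▸ h)

lemma dSV_zero_of_mem {S : E → Set F} {p : E × F} (hp : p ∈ svGraph S) :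
    dSV S p = 0 := by
  unfold dSV
  rw [show EMetric.infEdist p.2 (S p.1) = 0 from EMetric.infEdist_zero_of_mem (show p.2 ∈ S p.1 from hp)]
  simp

set_option maxHeartbeats 1000000 in
lemma norm_bound_of_lip {S : E → Set F} {p : E × F} (hp : p ∈ svGraph S) {ℓ : ℝ}
    (hℓ : 0 < ℓ) {U : Set (E × F)} (hU : U ∈ 𝓝 p)
    (hLip : ∀ q ∈ U, ∀ q' ∈ U, dSV S q ≤ dSV S q' + (((ℓ * dist q q' : ℝ)) : EReal))
    {ξ : E × F} (hξ : ξ ∈ frechetNormalCone2 (svGraph S) p) : ‖ξ.1‖ ≤ ℓ * ‖ξ.2‖ := by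
  have key : ∀ w : E, ⟪ξ.1, w⟫ ≤ ℓ * ‖ξ.2‖ * ‖w‖ := by
    intro w
    refine le_of_forall_pos_le_add fun ε hε => ?_
    set B : ℝ := ‖w‖ + ℓ * ‖w‖ + 1 with hB
    have hB0 : 0 < B := by positivity
    set ε₀ : ℝ := min 1 (ε / (2 * B)) with hε₀def
    have hε₀ : 0 < ε₀ := by positivity
    -- the cone inequality, in metric form
    have hev := hξ.2 ε₀ hε₀
    rw [eventually_nhdsWithin_iff, Metric.eventually_nhds_iff] at hev
    obtain ⟨δ, hδ, hδball⟩ := hev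
    obtain ⟨δU, hδU, hδUball⟩ := Metric.mem_nhds_iff.mp hU
    set t : ℝ := min 1 (min (δ / (2 * B)) (min (δU / (2 * B)) (ε / (2 * (‖ξ.2‖ + 1))))) with ht
    have ht0 : 0 < t := by positivity
    have ht1 : t ≤ 1 := min_le_left _ _
    have htδ : t * B ≤ δ / 2 := by
      have h1 : t ≤ δ / (2 * B) := le_trans (min_le_right _ _) (min_le_left _ _)
      calc t * B ≤ δ / (2 * B) * B := by nlinarith
        _ = δ / 2 := by field_simp <;> ring
    have htδU : t * B ≤ δU / 2 := by
      have h1 : t ≤ δU / (2 * B) :=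
        le_trans (min_le_right _ _) (le_trans (min_le_right _ _) (min_le_left _ _))
      calc t * B ≤ δU / (2 * B) * B := by nlinarith
        _ = δU / 2 := by field_simp <;> ring
    have htε : t * (‖ξ.2‖ + 1) ≤ ε / 2 := by
      have h1 : t ≤ ε / (2 * (‖ξ.2‖ + 1)) :=
        le_trans (min_le_right _ _) (le_trans (min_le_right _ _) (min_le_right _ _))
      have h2 : (0:ℝ) < ‖ξ.2‖ + 1 := by positivity
      calc t * (‖ξ.2‖ + 1) ≤ ε / (2 * (‖ξ.2‖ + 1)) * (‖ξ.2‖ + 1) := by nlinarith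
        _ = ε / 2 := by field_simp <;> ring
    set xt : E := p.1 + t • w with hxt
    have hdxt : dist xt p.1 = t * ‖w‖ := by
      rw [dist_eq_norm]
      simp [hxt, norm_smul, abs_of_pos ht0]
    have htB : t * ‖w‖ ≤ t * B := by
      have : ‖w‖ ≤ B := by nlinarith [norm_nonneg w]
      nlinarith
    have hq1U : (xt, p.2) ∈ U := by
      apply hδUball
      rw [mem_ball, Prod.dist_eq, hdxt]
      simp only [dist_self]
      have : max (t * ‖w‖) 0 ≤ t * B := by
        rw [max_le_iff]; exact ⟨htB, by positivity⟩
      calc max (t * ‖w‖) 0 ≤ t * B := this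
        _ ≤ δU / 2 := htδU
        _ < δU := by linarith
    have hpU : p ∈ U := mem_of_mem_nhds hU
    have hlip1 := hLip (xt, p.2) hq1U p hpU
    rw [dSV_zero_of_mem hp, zero_add] at hlip1
    have hdq : dist (xt, p.2) p = t * ‖w‖ := by
      rw [Prod.dist_eq, hdxt]
      simp only [dist_self]
      rw [max_eq_left (by positivity)]
    rw [hdq] at hlip1
    -- extract a point of S xt
    have hr0 : (0:ℝ) ≤ ℓ * (t * ‖w‖) := by positivity
    have hinf : EMetric.infEdist p.2 (S xt) ≤ ENNReal.ofReal (ℓ * (t * ‖w‖)) :=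
      ennreal_le_ofReal_of_ereal hr0 hlip1
    have hne : (S xt).Nonempty := by
      rw [Set.nonempty_iff_ne_empty]
      intro hemp
      rw [hemp, show EMetric.infEdist p.2 ∅ = ⊤ from EMetric.infEdist_empty] at hinf
      exact absurd (top_le_iff.mp hinf) ENNReal.ofReal_ne_top
    have hinfD : Metric.infDist p.2 (S xt) ≤ ℓ * (t * ‖w‖) := by
      rw [Metric.infDist]
      calc (EMetric.infEdist p.2 (S xt)).toReal ≤ (ENNReal.ofReal (ℓ * (t * ‖w‖))).toReal :=
            ENNReal.toReal_mono ENNReal.ofReal_ne_top hinf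
        _ = ℓ * (t * ‖w‖) := ENNReal.toReal_ofReal hr0
    have hlt : Metric.infDist p.2 (S xt) < ℓ * (t * ‖w‖) + t * t := by
      nlinarith
    obtain ⟨yt, hytmem, hytd⟩ := (Metric.infDist_lt_iff hne).mp hlt
    set qt : E × F := (xt, yt) with hqt
    have hqtΩ : qt ∈ svGraph S := hytmem
    have hytd' : dist yt p.2 ≤ ℓ * (t * ‖w‖) + t * t := by
      rw [dist_comm]; exact hytd.le
    have hdqt : dist qt p ≤ t * B := by
      rw [Prod.dist_eq]
      rw [max_le_iff]
      constructor
      · rw [show qt.1 = xt from rfl, hdxt]; exact htB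
      · calc dist qt.2 p.2 = dist yt p.2 := rfl
          _ ≤ ℓ * (t * ‖w‖) + t * t := hytd'
          _ ≤ t * B := by rw [hB]; nlinarith [norm_nonneg w]
    have hcone := hδball (lt_of_le_of_lt (hdqt.trans htδ) (by linarith)) hqtΩ
    have h1 : ⟪ξ.1, qt.1 - p.1⟫ = t * ⟪ξ.1, w⟫ := by
      have : qt.1 - p.1 = t • w := by simp [hqt, hxt]
      rw [this, real_inner_smul_right]
    have h2 : -⟪ξ.2, qt.2 - p.2⟫ ≤ ‖ξ.2‖ * (ℓ * (t * ‖w‖) + t * t) := by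
      calc -⟪ξ.2, qt.2 - p.2⟫ ≤ |⟪ξ.2, qt.2 - p.2⟫| := neg_le_abs _
        _ ≤ ‖ξ.2‖ * ‖qt.2 - p.2‖ := abs_real_inner_le_norm _ _
        _ ≤ ‖ξ.2‖ * (ℓ * (t * ‖w‖) + t * t) := by
            have : ‖qt.2 - p.2‖ = dist yt p.2 := by rw [dist_eq_norm]
            rw [this]
            exact mul_le_mul_of_nonneg_left hytd' (norm_nonneg _)
    have h3 : ‖qt - p‖ ≤ t * B := by rw [← dist_eq_norm]; exact hdqt
    have h4 : ε₀ * ‖qt - p‖ ≤ ε₀ * (t * B) := mul_le_mul_of_nonneg_left h3 hε₀.le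
    have h5 : t * ⟪ξ.1, w⟫ ≤ ‖ξ.2‖ * (ℓ * (t * ‖w‖) + t * t) + ε₀ * (t * B) := by
      have := hcone
      rw [h1] at this
      linarith
    -- divide by t
    have hε₀B : ε₀ * B ≤ ε / 2 := by
      have h6 : ε₀ ≤ ε / (2 * B) := min_le_right _ _
      calc ε₀ * B ≤ ε / (2 * B) * B := mul_le_mul_of_nonneg_right h6 hB0.le
        _ = ε / 2 := by field_simp <;> ring
    have h7 : ⟪ξ.1, w⟫ ≤ ‖ξ.2‖ * (ℓ * ‖w‖ + t) + ε₀ * B := by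
      rw [← mul_le_mul_iff_right₀ ht0]
      calc t * ⟪ξ.1, w⟫ ≤ ‖ξ.2‖ * (ℓ * (t * ‖w‖) + t * t) + ε₀ * (t * B) := h5
        _ = t * (‖ξ.2‖ * (ℓ * ‖w‖ + t) + ε₀ * B) := by ring
    have h8 : ‖ξ.2‖ * t ≤ ε / 2 := by
      have := htε
      nlinarith [norm_nonneg ξ.2, ht0.le]
    nlinarith [norm_nonneg ξ.2]
  by_cases h0 : ‖ξ.1‖ = 0
  · rw [h0]; positivity
  · have h1 := key ξ.1
    rw [real_inner_self_eq_norm_sq] at h1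
    have h2 : 0 < ‖ξ.1‖ := lt_of_le_of_ne (norm_nonneg _) (Ne.symm h0)
    nlinarith


lemma zero_mem_frechet {Ω : Set (E × F)} {p : E × F} (hp : p ∈ Ω) :
    (0 : E × F) ∈ frechetNormalCone2 Ω p := by
  refine ⟨hp, fun ε hε => Eventually.of_forall fun q => ?_⟩
  simp only [Prod.fst_zero, Prod.snd_zero, inner_zero_left, add_zero]
  positivity

lemma smul_mem_frechet {Ω : Set (E × F)} {p ξ : E × F} (h : ξ ∈ frechetNormalCone2 Ω p)
    {t : ℝ} (ht : 0 < t) : t • ξ ∈ frechetNormalCone2 Ω p := by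
  refine ⟨h.1, fun ε hε => (h.2 (ε / t) (by positivity)).mono fun q hq => ?_⟩
  have : ⟪(t • ξ).1, q.1 - p.1⟫ + ⟪(t • ξ).2, q.2 - p.2⟫
      = t * (⟪ξ.1, q.1 - p.1⟫ + ⟪ξ.2, q.2 - p.2⟫) := by
    simp [Prod.smul_fst, Prod.smul_snd, real_inner_smul_left]; ring
  rw [this]
  calc t * (⟪ξ.1, q.1 - p.1⟫ + ⟪ξ.2, q.2 - p.2⟫) ≤ t * (ε / t * ‖q - p‖) := by
        exact mul_le_mul_of_nonneg_left hq ht.le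
    _ = ε * ‖q - p‖ := by field_simp


theorem hasFDerivAt_norm_sub_sq (z₀ z₁ : E) :
    HasFDerivAt (fun z => ‖z - z₀‖^2) ((2:ℝ) • innerSL ℝ (z₁ - z₀)) z₁ := by
  have h1 : HasFDerivAt (fun z : E => z - z₀) (ContinuousLinearMap.id ℝ E) z₁ :=
    (hasFDerivAt_id z₁).sub_const z₀
  have h2 := (h1.inner ℝ h1)
  have h3 : (fun z : E => ⟪z - z₀, z - z₀⟫) = fun z => ‖z - z₀‖^2 := by
    funext z; exact real_inner_self_eq_norm_sq _
  rw [h3] at h2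
  convert h2 using 1
  · rfl
  · rfl
  ext v
  simp only [ContinuousLinearMap.smul_apply, innerSL_apply_apply, ContinuousLinearMap.comp_apply,
    ContinuousLinearMap.prod_apply, ContinuousLinearMap.id_apply, fderivInnerCLM_apply]
  rw [real_inner_comm v (z₁ - z₀)]
  ring_nf

theorem hasFDerivAt_sqrt_normsq (z₀ z₁ : E) (τ : ℝ) (h : 0 < ‖z₁ - z₀‖^2 + τ) :
    HasFDerivAt (fun z => Real.sqrt (‖z - z₀‖^2 + τ))
      ((Real.sqrt (‖z₁ - z₀‖^2 + τ))⁻¹ • innerSL ℝ (z₁ - z₀)) z₁ := by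
  have h1 : HasFDerivAt (fun z => ‖z - z₀‖^2 + τ) ((2:ℝ) • innerSL ℝ (z₁ - z₀)) z₁ :=
    (hasFDerivAt_norm_sub_sq z₀ z₁).add_const τ
  have h2 := (Real.hasDerivAt_sqrt (ne_of_gt h)).comp_hasFDerivAt z₁ h1
  convert h2 using 1
  · rfl
  · rfl
  · rfl
  ext v
  have hs : Real.sqrt (‖z₁ - z₀‖^2 + τ) ≠ 0 := by positivity
  simp only [ContinuousLinearMap.smul_apply, innerSL_apply_apply, smul_smul]
  rw [smul_eq_mul, smul_eq_mul]
  field_simp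

lemma min_mem_frechet {Ω : Set (E × F)} {w : E × F} (hw : w ∈ Ω) {φ : E × F → ℝ}
    {L : E × F →L[ℝ] ℝ} (hd : HasFDerivAt φ L w)
    (hmin : ∀ᶠ q in nhdsWithin w Ω, φ w ≤ φ q) (ξ : E × F)
    (hξ : ∀ h : E × F, ⟪ξ.1, h.1⟫ + ⟪ξ.2, h.2⟫ = -(L h)) :
    ξ ∈ frechetNormalCone2 Ω w := by
  refine ⟨hw, fun ε hε => ?_⟩
  have hlo := hd.isLittleO.def hε
  have hlo' : ∀ᶠ q in nhdsWithin w Ω, ‖φ q - φ w - L (q - w)‖ ≤ ε * ‖q - w‖ :=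
    hlo.filter_mono nhdsWithin_le_nhds
  filter_upwards [hlo', hmin] with q h1 h2
  have heq : ⟪ξ.1, q.1 - w.1⟫ + ⟪ξ.2, q.2 - w.2⟫ = -(L (q - w)) := by
    have := hξ (q - w); simpa using this
  rw [heq]
  calc -(L (q - w)) ≤ (φ q - φ w) - L (q - w) := by linarith
    _ ≤ ‖φ q - φ w - L (q - w)‖ := Real.le_norm_self _
    _ ≤ ε * ‖q - w‖ := h1

set_option maxHeartbeats 1000000 in
lemma keycore [ProperSpace E] [ProperSpace F] {S : E → Set F} (hS : IsClosed (svGraph S))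
    {p : E × F} {ℓ r : ℝ} (hℓ : 3 ≤ ℓ) (hr : 0 < r)
    {q q' : E × F} (hq : q ∈ ball p r) (hq' : q' ∈ ball p r) {D : ℝ} (hD0 : 0 ≤ D)
    (hDr : D ≤ ℓ * r) (hDval : dSV S q' = ((D : ℝ) : EReal))
    (hstrict : (((D + ℓ * dist q q' : ℝ)) : EReal) < dSV S q) :
    ∃ w ∈ svGraph S, ∃ ξ ∈ frechetNormalCone2 (svGraph S) w,
      dist w p ≤ 9 * ℓ * r ∧ ‖ξ.1‖ = ℓ / 2 ∧ ‖ξ.2‖ ≤ 1 := by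
  have hℓ0 : (0:ℝ) < ℓ := by linarith
  set x := q.1 with hx
  set y := q.2 with hy
  set x' := q'.1 with hx'
  set y' := q'.2 with hy'
  set e : ℝ := dist q q' with he_def
  have he0 : 0 ≤ e := dist_nonneg
  have he : 0 < e := by
    rcases lt_or_eq_of_le he0 with h | h
    · exact h
    · exfalso
      have hqq : q = q' := by rw [← dist_eq_zero]; exact h.symm
      rw [hqq, hDval, ← h] at hstrict
      simp only [mul_zero, add_zero] at hstrict
      exact lt_irrefl _ hstrict
  -- S x' is nonempty and closed; project y' on it
  have hne : (S x').Nonempty := by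
    rw [Set.nonempty_iff_ne_empty]
    intro hemp
    rw [dSV, ← hx', ← hy', hemp, show EMetric.infEdist y' ∅ = ⊤ from EMetric.infEdist_empty] at hDval
    simp at hDval
  have hcl : IsClosed (S x') := by
    have : S x' = (fun b => (x', b)) ⁻¹' svGraph S := rfl
    rw [this]
    exact hS.preimage (Continuous.prodMk_right x')
  obtain ⟨yh, hyhmem, hyhd⟩ := hcl.exists_infDist_eq_dist hne y'
  have hinfE : EMetric.infEdist y' (S x') = ENNReal.ofReal D := by
    have h1 : ((EMetric.infEdist y' (S x') : ℝ≥0∞) : EReal)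
        = ((ENNReal.ofReal D : ℝ≥0∞) : EReal) := by
      rw [show EMetric.infEdist y' (S x') = EMetric.infEdist q'.2 (S q'.1) from rfl]
      rw [← dSV, hDval, EReal.coe_ennreal_ofReal, max_eq_left hD0]
    exact_mod_cast h1
  have hyhD : dist y' yh = D := by
    rw [← hyhd, Metric.infDist, show Metric.infEDist y' (S x') = ENNReal.ofReal D from hinfE,
      ENNReal.toReal_ofReal hD0]
  -- constants
  set c : ℝ := ℓ / 2 with hc_def
  have hc1 : 1 ≤ c := by rw [hc_def]; linarith
  have hc0 : 0 < c := by linarith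
  set σ : ℝ := (ℓ / 2 - 1) * e / 2 with hσ_def
  have hσ : 0 < σ := by
    rw [hσ_def]; nlinarith
  set M : ℝ := D + σ + (c + 1) * e with hM_def
  have hM : 0 < M := by rw [hM_def]; nlinarith
  -- the penalty function
  set φ : E × F → ℝ :=
    fun w => c * Real.sqrt (‖w.1 - x‖^2 + 0) + Real.sqrt (‖w.2 - y‖^2 + σ^2) with hφ_def
  have hφval : ∀ w : E × F, φ w = c * ‖w.1 - x‖ + Real.sqrt (‖w.2 - y‖^2 + σ^2) := by
    intro w
    rw [hφ_def]
    simp only [add_zero]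
    rw [Real.sqrt_sq (norm_nonneg _)]
  have hφcont : Continuous φ := by
    rw [hφ_def]
    apply Continuous.add
    · exact continuous_const.mul (((continuous_fst.sub continuous_const).norm.pow 2).add
        continuous_const).sqrt
    · exact (((continuous_snd.sub continuous_const).norm.pow 2).add continuous_const).sqrt
  -- the compact set
  set K : Set (E × F) := svGraph S ∩ closedBall q (3 * M) with hK_def
  have hKcpt : IsCompact K := (isCompact_closedBall q (3 * M)).inter_left hS
  have hxe : dist x' x ≤ e := by
    rw [dist_comm, he_def, Prod.dist_eq]; exact le_max_left _ _
  have hye : dist y' y ≤ e := by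
    rw [dist_comm, he_def, Prod.dist_eq]; exact le_max_right _ _
  have hK' : ((x', yh) : E × F) ∈ K := by
    constructor
    · exact hyhmem
    · rw [mem_closedBall, Prod.dist_eq]
      rw [max_le_iff]
      constructor
      · calc dist x' x ≤ e := hxe
          _ ≤ 3 * M := by rw [hM_def]; nlinarith
      · calc dist yh y ≤ dist yh y' + dist y' y := dist_triangle _ _ _
          _ ≤ D + e := by rw [dist_comm yh y']; rw [hyhD]; linarith [hye]
          _ ≤ 3 * M := by rw [hM_def]; nlinarith
  have hφK' : φ (x', yh) ≤ M := by
    rw [hφval]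
    have h1 : Real.sqrt (‖yh - y‖^2 + σ^2) ≤ ‖yh - y‖ + σ := by
      rw [show ‖yh - y‖ + σ = Real.sqrt ((‖yh - y‖ + σ)^2) from
        (Real.sqrt_sq (by positivity)).symm]
      apply Real.sqrt_le_sqrt
      nlinarith [norm_nonneg (yh - y)]
    have h2 : ‖yh - y‖ ≤ D + e := by
      rw [← dist_eq_norm]
      calc dist yh y ≤ dist yh y' + dist y' y := dist_triangle _ _ _
        _ ≤ D + e := by rw [dist_comm yh y', hyhD]; linarith [hye]
    have h3 : ‖x' - x‖ ≤ e := by rw [← dist_eq_norm]; exact hxe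
    rw [hM_def]
    calc c * ‖x' - x‖ + Real.sqrt (‖yh - y‖^2 + σ^2) ≤ c * e + (D + e + σ) := by
          have := mul_le_mul_of_nonneg_left h3 hc0.le
          linarith
      _ = D + σ + (c + 1) * e := by ring
  -- minimize
  obtain ⟨w, hwK, hwmin⟩ := hKcpt.exists_isMinOn ⟨_, hK'⟩ hφcont.continuousOn
  have hwmin' : ∀ z ∈ K, φ w ≤ φ z := fun z hz => hwmin hz
  have hφw : φ w ≤ M := le_trans (hwmin' _ hK') hφK'
  set a := w.1 with ha_def
  set b := w.2 with hb_def
  have hbS : b ∈ S a := hwK.1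
  have hbound1 : c * ‖a - x‖ ≤ M := by
    have := hφw; rw [hφval] at this
    have h2 : 0 ≤ Real.sqrt (‖b - y‖^2 + σ^2) := Real.sqrt_nonneg _
    linarith
  have hbound2 : ‖b - y‖ ≤ M := by
    have := hφw; rw [hφval] at this
    have h1 : ‖b - y‖ ≤ Real.sqrt (‖b - y‖^2 + σ^2) := by
      rw [show ‖b - y‖ = Real.sqrt (‖b - y‖^2) from (Real.sqrt_sq (norm_nonneg _)).symm]
      apply Real.sqrt_le_sqrt
      nlinarith [hσ, Real.sq_sqrt (show (0:ℝ) ≤ ‖b-y‖^2 from by positivity)]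
    have h2 : 0 ≤ c * ‖a - x‖ := by positivity
    linarith
  -- a ≠ x
  have hMlt : M < D + ℓ * e := by rw [hM_def, hc_def, hσ_def]; nlinarith
  have hax : a ≠ x := by
    intro hax
    have h1 : dSV S q ≤ ((M : ℝ) : EReal) := by
      rw [dSV, ← hx, ← hy]
      have h2 : EMetric.infEdist y (S x) ≤ edist y b := by
        apply EMetric.infEdist_le_edist_of_mem
        rw [← hax]; exact hbS
      have h3 : ((EMetric.infEdist y (S x) : ℝ≥0∞) : EReal) ≤ ((dist y b : ℝ) : EReal) := by
        rw [edist_dist] at h2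
        calc ((EMetric.infEdist y (S x) : ℝ≥0∞) : EReal)
            ≤ ((ENNReal.ofReal (dist y b) : ℝ≥0∞) : EReal) :=
              EReal.coe_ennreal_le_coe_ennreal_iff.mpr h2
          _ = ((dist y b : ℝ) : EReal) := by
              rw [EReal.coe_ennreal_ofReal, max_eq_left dist_nonneg]
      calc ((EMetric.infEdist y (S x) : ℝ≥0∞) : EReal) ≤ ((dist y b : ℝ) : EReal) := h3
        _ ≤ ((M : ℝ) : EReal) := by
            rw [EReal.coe_le_coe_iff, dist_comm, dist_eq_norm]
            exact hbound2
    have h4 : (((D + ℓ * e : ℝ)) : EReal) < ((M : ℝ) : EReal) := lt_of_lt_of_le hstrict h1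
    rw [EReal.coe_lt_coe_iff] at h4
    linarith
  -- w is within M of q
  have hdistwq : dist w q ≤ M := by
    rw [Prod.dist_eq, max_le_iff]
    constructor
    · rw [← hx, ← ha_def, dist_eq_norm]
      nlinarith [norm_nonneg (a - x)]
    · rw [← hy, ← hb_def, dist_eq_norm]
      exact hbound2
  -- local minimality in the filter sense
  have hev : ∀ᶠ z in nhdsWithin w (svGraph S), φ w ≤ φ z := by
    have h2M : (0:ℝ) < 2 * M := by linarith
    have h1 : ∀ᶠ z in 𝓝 w, z ∈ ball w (2 * M) := by
      rw [Metric.eventually_nhds_iff_ball]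
      exact ⟨2 * M, h2M, fun z hz => hz⟩
    have h1' : ∀ᶠ z in nhdsWithin w (svGraph S), z ∈ ball w (2 * M) :=
      h1.filter_mono nhdsWithin_le_nhds
    have h2 : ∀ᶠ z in nhdsWithin w (svGraph S), z ∈ svGraph S :=
      eventually_mem_nhdsWithin
    filter_upwards [h1', h2] with z hz1 hz2
    apply hwmin'
    refine ⟨hz2, ?_⟩
    rw [mem_closedBall]
    calc dist z q ≤ dist z w + dist w q := dist_triangle _ _ _
      _ ≤ 2 * M + M := by
          have := mem_ball.mp hz1
          linarith
      _ = 3 * M := by ring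
  -- derivative data
  set s₁ : ℝ := ‖a - x‖ with hs₁_def
  have hs₁ : 0 < s₁ := by
    rw [hs₁_def, norm_pos_iff, sub_ne_zero]; exact hax
  set s₂ : ℝ := Real.sqrt (‖b - y‖^2 + σ^2) with hs₂_def
  have hs₂ : 0 < s₂ := Real.sqrt_pos.mpr (by positivity)
  have hsq1 : Real.sqrt (‖a - x‖^2 + 0) = s₁ := by
    rw [add_zero, Real.sqrt_sq (norm_nonneg _)]
  have hd1 : HasFDerivAt (fun z : E × F => Real.sqrt (‖z.1 - x‖^2 + 0))
      (((Real.sqrt (‖a - x‖^2 + 0))⁻¹ • innerSL ℝ (a - x)).comp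
        (ContinuousLinearMap.fst ℝ E F)) w := by
    have hpos : 0 < ‖a - x‖^2 + 0 := by rw [add_zero]; positivity
    exact (hasFDerivAt_sqrt_normsq x a 0 hpos).comp w (hasFDerivAt_fst (𝕜 := ℝ) (p := w))
  have hd2 : HasFDerivAt (fun z : E × F => Real.sqrt (‖z.2 - y‖^2 + σ^2))
      (((Real.sqrt (‖b - y‖^2 + σ^2))⁻¹ • innerSL ℝ (b - y)).comp
        (ContinuousLinearMap.snd ℝ E F)) w := by
    have hpos : 0 < ‖b - y‖^2 + σ^2 := by positivity
    exact (hasFDerivAt_sqrt_normsq y b (σ^2) hpos).comp w (hasFDerivAt_snd (𝕜 := ℝ) (p := w))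
  set L : (E × F) →L[ℝ] ℝ :=
    (c • (((Real.sqrt (‖a - x‖^2 + 0))⁻¹ • innerSL ℝ (a - x)).comp
      (ContinuousLinearMap.fst ℝ E F))) +
    ((Real.sqrt (‖b - y‖^2 + σ^2))⁻¹ • innerSL ℝ (b - y)).comp
      (ContinuousLinearMap.snd ℝ E F) with hL_def
  have hdφ : HasFDerivAt φ L w := by
    rw [hφ_def, hL_def]
    exact (hd1.const_mul c).add hd2
  set ξ : E × F := (-(c * s₁⁻¹) • (a - x), -(s₂⁻¹) • (b - y)) with hξ_def
  have hξeq : ∀ h : E × F, ⟪ξ.1, h.1⟫ + ⟪ξ.2, h.2⟫ = -(L h) := by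
    intro h
    rw [hξ_def, hL_def]
    simp only [ContinuousLinearMap.add_apply, ContinuousLinearMap.coe_comp',
      Function.comp_apply, ContinuousLinearMap.coe_fst', ContinuousLinearMap.coe_snd',
      ContinuousLinearMap.smul_apply, innerSL_apply_apply, smul_eq_mul, real_inner_smul_left,
      hsq1, ← hs₂_def]
    ring
  have hξmem : ξ ∈ frechetNormalCone2 (svGraph S) w :=
    min_mem_frechet hwK.1 hdφ hev ξ hξeq
  refine ⟨w, hwK.1, ξ, hξmem, ?_, ?_, ?_⟩
  · -- distance bound
    have he2r : e ≤ 2 * r := by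
      rw [he_def]
      calc dist q q' ≤ dist q p + dist p q' := dist_triangle _ _ _
        _ ≤ 2 * r := by
            have h1 := mem_ball.mp hq
            have h2 := mem_ball.mp hq'
            rw [dist_comm p q']
            linarith
    calc dist w p ≤ dist w q + dist q p := dist_triangle _ _ _
      _ ≤ M + r := by
          have := mem_ball.mp hq
          linarith [hdistwq]
      _ ≤ 9 * ℓ * r := by
          rw [hM_def, hσ_def, hc_def]
          nlinarith
  · -- ‖ξ.1‖ = ℓ/2
    show ‖-(c * s₁⁻¹) • (a - x)‖ = ℓ / 2
    rw [norm_smul, Real.norm_eq_abs, abs_neg, abs_of_pos (by positivity), ← hs₁_def, hc_def]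
    field_simp
  · -- ‖ξ.2‖ ≤ 1
    show ‖-(s₂⁻¹) • (b - y)‖ ≤ 1
    rw [norm_smul, Real.norm_eq_abs, abs_neg, abs_of_pos (by positivity)]
    have hle : ‖b - y‖ ≤ s₂ := by
      rw [hs₂_def, show (‖b - y‖:ℝ) ≤ Real.sqrt (‖b - y‖ ^ 2 + σ ^ 2) ↔
        ‖b - y‖ ^ 2 ≤ ‖b - y‖ ^ 2 + σ ^ 2 from Real.le_sqrt (norm_nonneg _) (by positivity)]
      nlinarith [sq_nonneg σ]
    rw [inv_mul_le_iff₀ hs₂, mul_one]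
    exact hle


lemma keylemma [ProperSpace E] [ProperSpace F] {S : E → Set F} (hS : IsClosed (svGraph S))
    {p : E × F} (hp : p ∈ svGraph S) {ℓ r : ℝ} (hℓ : 3 ≤ ℓ) (hr : 0 < r)
    (hfail : ∃ q ∈ ball p r, ∃ q' ∈ ball p r,
      dSV S q' + (((ℓ * dist q q' : ℝ)) : EReal) < dSV S q) :
    ∃ w ∈ svGraph S, ∃ ξ ∈ frechetNormalCone2 (svGraph S) w,
      dist w p ≤ 9 * ℓ * r ∧ ‖ξ.1‖ = ℓ / 2 ∧ ‖ξ.2‖ ≤ 1 := by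
  have hℓ0 : (0:ℝ) < ℓ := by linarith
  by_cases hcase : ∃ z ∈ ball p r, (((ℓ * dist z p : ℝ)) : EReal) < dSV S z
  · obtain ⟨z, hz, hzlt⟩ := hcase
    refine keycore hS hℓ hr hz (mem_ball_self hr) le_rfl (by positivity) ?_ ?_
    · rw [dSV_zero_of_mem hp]; simp
    · rw [show ((0:ℝ) + ℓ * dist z p : ℝ) = (ℓ * dist z p : ℝ) by ring]
      exact hzlt
  · push_neg at hcase
    obtain ⟨q, hq, q', hq', hlt⟩ := hfail
    have hq'le := hcase q' hq'
    have htop : EMetric.infEdist q'.2 (S q'.1) ≠ ⊤ := by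
      intro h
      rw [dSV, h] at hq'le
      simp only [EReal.coe_ennreal_top] at hq'le
      exact absurd hq'le (not_le.mpr (EReal.coe_lt_top _))
    set D : ℝ := (EMetric.infEdist q'.2 (S q'.1)).toReal with hD_def
    have hDval : dSV S q' = ((D : ℝ) : EReal) := by
      rw [dSV, ← ENNReal.ofReal_toReal htop, EReal.coe_ennreal_ofReal,
        max_eq_left ENNReal.toReal_nonneg]
    have hD0 : 0 ≤ D := ENNReal.toReal_nonneg
    have hDr : D ≤ ℓ * r := by
      rw [hDval] at hq'le
      rw [EReal.coe_le_coe_iff] at hq'le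
      have h2 : dist q' p ≤ r := (mem_ball.mp hq').le
      calc D ≤ ℓ * dist q' p := hq'le
        _ ≤ ℓ * r := mul_le_mul_of_nonneg_left h2 hℓ0.le
    refine keycore hS hℓ hr hq hq' hD0 hDr hDval ?_
    rw [hDval, ← EReal.coe_add] at hlt
    exact hlt

set_option maxHeartbeats 1000000 in
/-- Mordukhovich's criterion at infinity, Lipschitz form. -/
theorem stmt16 {n m : ℕ} (S : Eucl n → Set (Eucl m)) (hS : IsClosed (svGraph S))
    (ybar : Eucl m) (hJ : ybar ∈ jelonek S) :
    coderivAtInfty S ybar 0 = ({0} : Set (Eucl n)) ↔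
      ∃ R > (0:ℝ), ∃ ℓ > (0:ℝ), ∃ V ∈ 𝓝 ybar,
        ∀ p ∈ svGraph S, R < ‖p.1‖ → p.2 ∈ V →
          ∃ U ∈ 𝓝 p, ∀ q ∈ U, ∀ q' ∈ U,
            dSV S q ≤ dSV S q' + (((ℓ * dist q q' : ℝ) : EReal)) := by
  constructor
  · -- hard direction
    intro hcrit
    by_contra hRHS
    push_neg at hRHS
    have H : ∀ k : ℕ, ∃ w ξ : Eucl n × Eucl m,
        w ∈ svGraph S ∧ ξ ∈ frechetNormalCone2 (svGraph S) w ∧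
        (k : ℝ) - 2 ≤ ‖w.1‖ ∧ dist w.2 ybar ≤ 10 / ((k:ℝ) + 1) ∧
        ‖ξ.1‖ = ((k:ℝ) + 3) / 2 ∧ ‖ξ.2‖ ≤ 1 := by
      intro k
      set ℓk : ℝ := (k : ℝ) + 3 with hℓk_def
      have hℓk3 : 3 ≤ ℓk := by rw [hℓk_def]; linarith [Nat.cast_nonneg (α := ℝ) k]
      have hℓk0 : 0 < ℓk := by linarith
      have hRk : (0:ℝ) < (k:ℝ) + 1 := by positivity
      have hVk : ball ybar (1/((k:ℝ)+1)) ∈ 𝓝 ybar := ball_mem_nhds _ (by positivity)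
      obtain ⟨p, hpG, hpR, hpV, hpfail⟩ := hRHS ((k:ℝ)+1) hRk ℓk hℓk0 _ hVk
      set rk : ℝ := 1 / ℓk^2 with hrk_def
      have hrk0 : 0 < rk := by positivity
      obtain ⟨q, hq, q', hq', hlt⟩ := hpfail (ball p rk) (ball_mem_nhds _ hrk0)
      have hfail : ∃ q ∈ ball p rk, ∃ q' ∈ ball p rk,
          dSV S q' + (((ℓk * dist q q' : ℝ)) : EReal) < dSV S q :=
        ⟨q, hq, q', hq', hlt⟩
      obtain ⟨w, hwG, ξ, hξcone, hdist, hξ1, hξ2⟩ := keylemma hS hpG hℓk3 hrk0 hfail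
      have hd9 : dist w p ≤ 9 / ℓk := by
        have : 9 * ℓk * rk = 9 / ℓk := by rw [hrk_def]; field_simp
        rwa [this] at hdist
      have hd3 : dist w p ≤ 3 := by
        calc dist w p ≤ 9 / ℓk := hd9
          _ ≤ 9 / 3 := div_le_div_of_nonneg_left (by norm_num) (by norm_num) hℓk3
          _ = 3 := by norm_num
      refine ⟨w, ξ, hwG, hξcone, ?_, ?_, hξ1, hξ2⟩
      · -- (k:ℝ) - 2 ≤ ‖w.1‖
        have h1 : dist w.1 p.1 ≤ dist w p := by
          rw [Prod.dist_eq]; exact le_max_left _ _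
        have h2 : ‖p.1‖ - ‖w.1‖ ≤ dist w.1 p.1 := by
          rw [dist_comm, dist_eq_norm]
          exact norm_sub_norm_le _ _
        have := hd3
        linarith
      · -- dist w.2 ybar ≤ 10/(k+1)
        have h1 : dist w.2 p.2 ≤ dist w p := by
          rw [Prod.dist_eq]; exact le_max_right _ _
        have h2 : dist p.2 ybar ≤ 1/((k:ℝ)+1) := (mem_ball.mp hpV).le
        have h3 : 9 / ℓk ≤ 9 / ((k:ℝ)+1) := by
          apply div_le_div_of_nonneg_left (by norm_num) hRk (by rw [hℓk_def]; linarith)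
        calc dist w.2 ybar ≤ dist w.2 p.2 + dist p.2 ybar := dist_triangle _ _ _
          _ ≤ 9/((k:ℝ)+1) + 1/((k:ℝ)+1) := by linarith [h1.trans (hd9.trans h3)]
          _ = 10 / ((k:ℝ)+1) := by ring
    choose w ξ hwG hξcone hw1 hw2 hξ1 hξ2 using H
    set η : ℕ → Eucl n × Eucl m := fun k => (((k:ℝ) + 3) / 2)⁻¹ • ξ k with hη_def
    have hck : ∀ k : ℕ, (0:ℝ) < ((k:ℝ) + 3) / 2 := fun k => by positivity
    have hηcone : ∀ k, η k ∈ frechetNormalCone2 (svGraph S) (w k) :=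
      fun k => smul_mem_frechet (hξcone k) (inv_pos.mpr (hck k))
    have hη1 : ∀ k, ‖(η k).1‖ = 1 := by
      intro k
      rw [hη_def]
      simp only [Prod.smul_fst]
      rw [norm_smul, Real.norm_eq_abs, abs_of_pos (inv_pos.mpr (hck k)), hξ1 k]
      field_simp
    have hη2 : ∀ k, ‖(η k).2‖ ≤ 2 / ((k:ℝ) + 3) := by
      intro k
      rw [hη_def]
      simp only [Prod.smul_snd]
      rw [norm_smul, Real.norm_eq_abs, abs_of_pos (inv_pos.mpr (hck k))]
      have h1 : (((k:ℝ) + 3) / 2)⁻¹ = 2 / ((k:ℝ)+3) := by field_simp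
      rw [h1]
      calc 2/((k:ℝ)+3) * ‖(ξ k).2‖ ≤ 2/((k:ℝ)+3) * 1 :=
            mul_le_mul_of_nonneg_left (hξ2 k) (by positivity)
        _ = 2/((k:ℝ)+3) := mul_one _
    have hηball : ∀ k, η k ∈ closedBall (0 : Eucl n × Eucl m) 1 := by
      intro k
      rw [mem_closedBall_zero_iff, Prod.norm_def]
      rw [max_le_iff]
      constructor
      · rw [hη1 k]
      · calc ‖(η k).2‖ ≤ 2/((k:ℝ)+3) := hη2 k
          _ ≤ 1 := by
            rw [div_le_one (by positivity)]; linarith [Nat.cast_nonneg (α := ℝ) k]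
    obtain ⟨ζ, hζmem, ψ, hψmono, hψlim⟩ :=
      (isCompact_closedBall (0 : Eucl n × Eucl m) 1).tendsto_subseq hηball
    have hψle : ∀ j : ℕ, (j:ℝ) ≤ (ψ j : ℝ) := fun j => by exact_mod_cast hψmono.le_apply
    have hψR : Tendsto (fun j => (ψ j : ℝ)) atTop atTop :=
      tendsto_natCast_atTop_atTop.comp hψmono.tendsto_atTop
    have hfst : Tendsto (fun j => (η (ψ j)).1) atTop (𝓝 ζ.1) :=
      (continuous_fst.tendsto ζ).comp hψlim
    have hsnd : Tendsto (fun j => (η (ψ j)).2) atTop (𝓝 ζ.2) :=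
      (continuous_snd.tendsto ζ).comp hψlim
    have hζ1 : ‖ζ.1‖ = 1 := by
      have h1 : Tendsto (fun j => ‖(η (ψ j)).1‖) atTop (𝓝 ‖ζ.1‖) :=
        (continuous_norm.tendsto ζ.1).comp hfst
      have h2 : (fun j => ‖(η (ψ j)).1‖) = fun _ => (1:ℝ) := funext fun j => hη1 (ψ j)
      rw [h2] at h1
      exact tendsto_nhds_unique h1 tendsto_const_nhds
    have hζ2 : ζ.2 = 0 := by
      have hb : Tendsto (fun j => 2 / ((ψ j : ℝ) + 3)) atTop (𝓝 0) :=
        tendsto_const_nhds.div_atTop (hψR.atTop_add tendsto_const_nhds)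
      have h0 : Tendsto (fun j => (η (ψ j)).2) atTop (𝓝 0) :=
        squeeze_zero_norm (fun j => hη2 (ψ j)) hb
      exact tendsto_nhds_unique hsnd h0
    have hmem : (ζ.1, (0 : Eucl m)) ∈ normalConeAtInfty (svGraph S) ybar := by
      refine ⟨fun j => w (ψ j), fun j => η (ψ j), fun j => hwG (ψ j), ?_, ?_,
        fun j => hηcone (ψ j), ?_⟩
      · apply tendsto_atTop_mono (fun j => ?_)
          (tendsto_atTop_add_const_right atTop (-2 : ℝ) hψR)
        calc (ψ j : ℝ) + (-2) = (ψ j : ℝ) - 2 := by ring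
          _ ≤ ‖(w (ψ j)).1‖ := hw1 (ψ j)
      · rw [tendsto_iff_dist_tendsto_zero]
        apply squeeze_zero (fun j => dist_nonneg) (fun j => hw2 (ψ j))
        apply tendsto_const_nhds.div_atTop (hψR.atTop_add tendsto_const_nhds)
      · have : (ζ.1, (0 : Eucl m)) = ζ := by
          rw [← hζ2]
        rw [this]
        exact hψlim
    have hu : ζ.1 ∈ coderivAtInfty S ybar 0 := by
      show (ζ.1, -(0:Eucl m)) ∈ normalConeAtInfty (svGraph S) ybar
      rwa [neg_zero]
    rw [hcrit] at hu
    rw [Set.mem_singleton_iff] at hu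
    rw [hu] at hζ1
    simp at hζ1
  · -- easy direction
    rintro ⟨R, hR, ℓ, hℓ, V, hV, hLip⟩
    ext u
    simp only [Set.mem_singleton_iff]
    constructor
    · intro hu
      have hu' : (u, (0 : Eucl m)) ∈ normalConeAtInfty (svGraph S) ybar := by
        have : (u, -(0:Eucl m)) ∈ normalConeAtInfty (svGraph S) ybar := hu
        rwa [neg_zero] at this
      obtain ⟨pk, ξk, hmem, hxt, hyt, hcone, hlim⟩ := hu'
      have hev1 : ∀ᶠ k in atTop, R < ‖(pk k).1‖ := hxt.eventually_gt_atTop R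
      have hev2 : ∀ᶠ k in atTop, (pk k).2 ∈ V := hyt hV
      have hbound : ∀ᶠ k in atTop, ‖(ξk k).1‖ ≤ ℓ * ‖(ξk k).2‖ := by
        filter_upwards [hev1, hev2] with k h1 h2
        obtain ⟨U, hU, hULip⟩ := hLip (pk k) (hmem k) h1 h2
        exact norm_bound_of_lip (hmem k) hℓ hU hULip (hcone k)
      have hfst : Tendsto (fun k => (ξk k).1) atTop (𝓝 u) :=
        (continuous_fst.tendsto (u, (0:Eucl m))).comp hlim
      have hsnd : Tendsto (fun k => (ξk k).2) atTop (𝓝 (0 : Eucl m)) :=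
        (continuous_snd.tendsto (u, (0:Eucl m))).comp hlim
      have t1 : Tendsto (fun k => ‖(ξk k).1‖) atTop (𝓝 ‖u‖) := hfst.norm
      have t2 : Tendsto (fun k => ℓ * ‖(ξk k).2‖) atTop (𝓝 0) := by
        have h0 : Tendsto (fun k => ‖(ξk k).2‖) atTop (𝓝 0) := by
          simpa using hsnd.norm
        simpa using h0.const_mul ℓ
      have hle : ‖u‖ ≤ 0 := le_of_tendsto_of_tendsto t1 t2 hbound
      exact norm_le_zero_iff.mp hle
    · rintro rfl
      obtain ⟨xk, yk, hxk, hyk, hylim⟩ := hJ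
      show ((0:Eucl n), -(0:Eucl m)) ∈ normalConeAtInfty (svGraph S) ybar
      rw [neg_zero]
      refine ⟨fun k => (xk k, yk k), fun _ => 0, fun k => hyk k, hxk, hylim,
        fun k => zero_mem_frechet (hyk k), ?_⟩
      have : ((0:Eucl n), (0:Eucl m)) = (0 : Eucl n × Eucl m) := rfl
      rw [this]
      exact tendsto_const_nhds
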